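/- Let G be a nonempty finite set and for each g ∈ G let a_g ≤ b_g be reals. Then the set { ∑_{g∈G} p_g : there exist binaries v_g ∈ {0,1} with ∑_{g∈G} v_g ≥ 1 and reals p_g with a_g·v_g ≤ p_g ≤ b_g·v_g for all g ∈ G } is equal to the union over all nonempty subsets S ⊆ G of the closed intervals [∑_{g∈S} a_g, ∑_{g∈S} b_g]. -/

import Mathlib

open Finset in
/-- Let `G` be a nonempty finite set and for each `g ∈ G` let `a g ≤ b g` be
reals.  The set of achievable total powers
`{ ∑_{g∈G} p g : ∃ binaries v g ∈ {0,1} with ∑ v g ≥ 1 and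
a g * v g ≤ p g ≤ b g * v g for all g ∈ G }` equals the union, over all
nonempty subsets `S ⊆ G`, of the closed intervals
`[∑_{g∈S} a g, ∑_{g∈S} b g]`. -/
theorem total_power_set_eq_union_Icc {ι : Type*} (G : Finset ι)
    (hG : G.Nonempty) (a b : ι → ℝ) (hab : ∀ g ∈ G, a g ≤ b g) :
    {x : ℝ | ∃ v p : ι → ℝ,
        (∀ g ∈ G, v g = 0 ∨ v g = 1) ∧
        1 ≤ ∑ g ∈ G, v g ∧
        (∀ g ∈ G, a g * v g ≤ p g ∧ p g ≤ b g * v g) ∧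
        x = ∑ g ∈ G, p g}
      = ⋃ S ∈ {S : Finset ι | S ⊆ G ∧ S.Nonempty},
          Set.Icc (∑ g ∈ S, a g) (∑ g ∈ S, b g) := by
  classical
  ext x
  simp only [Set.mem_setOf_eq, Set.mem_iUnion, Set.mem_Icc, exists_prop]
  constructor
  · rintro ⟨v, p, hv, hsum, hp, rfl⟩
    set S := G.filter (fun g => v g = 1) with hS
    have hSG : S ⊆ G := filter_subset _ _
    have hzero : ∀ g ∈ G, g ∉ S → p g = 0 := by
      intro g hg hgS
      have hv0 : v g = 0 := by
        rcases hv g hg with h | h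
        · exact h
        · exact absurd (mem_filter.mpr ⟨hg, h⟩) hgS
      have := hp g hg
      rw [hv0] at this
      simp at this
      linarith [this.1, this.2]
    have hsum_eq : ∑ g ∈ G, p g = ∑ g ∈ S, p g :=
      (Finset.sum_subset hSG (fun g hg hgS => hzero g hg hgS)).symm
    have hSne : S.Nonempty := by
      by_contra h
      rw [Finset.not_nonempty_iff_eq_empty] at h
      have : ∑ g ∈ G, v g = 0 := by
        apply Finset.sum_eq_zero
        intro g hg
        rcases hv g hg with h' | h'
        · exact h'
        · have hm : g ∈ S := mem_filter.mpr ⟨hg, h'⟩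
          rw [h] at hm
          exact absurd hm (Finset.notMem_empty g)
      linarith
    refine ⟨S, ⟨hSG, hSne⟩, ?_, ?_⟩
    · rw [hsum_eq]
      apply Finset.sum_le_sum
      intro g hg
      have hv1 : v g = 1 := (mem_filter.mp hg).2
      have := (hp g (hSG hg)).1
      rw [hv1] at this; linarith
    · rw [hsum_eq]
      apply Finset.sum_le_sum
      intro g hg
      have hv1 : v g = 1 := (mem_filter.mp hg).2
      have := (hp g (hSG hg)).2
      rw [hv1] at this; linarith
  · rintro ⟨S, ⟨hSG, hSne⟩, hx1, hx2⟩
    set D : ℝ := ∑ g ∈ S, (b g - a g) with hD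
    have hDnn : 0 ≤ D := Finset.sum_nonneg fun g hg => by linarith [hab g (hSG hg)]
    have hDsum : D = ∑ g ∈ S, b g - ∑ g ∈ S, a g := Finset.sum_sub_distrib _ _
    set t : ℝ := (x - ∑ g ∈ S, a g) / D with ht
    refine ⟨fun g => if g ∈ S then 1 else 0,
      fun g => if g ∈ S then a g + t * (b g - a g) else 0, ?_, ?_, ?_, ?_⟩
    · intro g _; by_cases h : g ∈ S <;> simp [h]
    · have : ∑ g ∈ G, (if g ∈ S then (1:ℝ) else 0) = S.card := by
        rw [Finset.sum_ite_mem, Finset.inter_eq_right.mpr hSG]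
        simp
      rw [this]
      have : 1 ≤ S.card := Finset.card_pos.mpr hSne
      exact_mod_cast this
    · intro g hg
      by_cases h : g ∈ S
      · simp only [h, if_true, mul_one]
        have hba : 0 ≤ b g - a g := by linarith [hab g hg]
        by_cases hD0 : D = 0
        · have : b g - a g = 0 := by
            have := (Finset.sum_eq_zero_iff_of_nonneg
              (fun i hi => by linarith [hab i (hSG hi)] : ∀ i ∈ S, (0:ℝ) ≤ b i - a i)).mp
              (hD ▸ hD0) g h
            linarith [this]
          rw [this, mul_zero, add_zero]
          exact ⟨le_refl _, by linarith⟩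
        · have hDpos : 0 < D := lt_of_le_of_ne hDnn (Ne.symm hD0)
          have ht0 : 0 ≤ t := div_nonneg (by linarith) hDnn
          have ht1 : t ≤ 1 := by
            rw [ht, div_le_one hDpos]
            linarith [hDsum]
          constructor
          · nlinarith
          · nlinarith
      · simp [h]
    · have hsplit : ∑ g ∈ G, (if g ∈ S then a g + t * (b g - a g) else 0)
          = ∑ g ∈ S, (a g + t * (b g - a g)) := by
        rw [Finset.sum_ite_mem, Finset.inter_eq_right.mpr hSG]
      rw [hsplit, Finset.sum_add_distrib, ← Finset.mul_sum, ← hD]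
      by_cases hD0 : D = 0
      · have : x = ∑ g ∈ S, a g := by
          have := hDsum
          rw [hD0] at this
          linarith
        rw [hD0, mul_zero, add_zero, this]
      · rw [ht, div_mul_cancel₀ _ hD0]; ring
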